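/- For a random variable x in an operator-valued probability space, the two moment-cumulant relations Φ_x = C_x ∘ (I + I·Φ_x·I) · (1 + I·Φ_x) and Φ_x = (1 + Φ_x·I) · C_x ∘ (I + I·Φ_x·I) are equivalent (each determines the same cumulant series C_x from Φ_x). -/
import Mathlib


open scoped BigOperators

/-- A multilinear function series over `B`: a sequence of `n`-ary `B`-valued functions
(multilinearity is imposed separately via `MLS.IsMultilinear`). -/
abbrev MLS (B : Type*) : Type _ := ∀ n : ℕ, (Fin n → B) → B

namespace MLS

variable {B : Type*}

/-- The constant term `F₀` of a multilinear function series. -/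
def const (F : MLS B) : B := F 0 Fin.elim0

/-- `F` is a multilinear function series (over the base ring `R`): every component
agrees with an `R`-multilinear map. -/
def IsMultilinear (R : Type*) [CommRing R] {B : Type*} [Ring B] [Algebra R B]
    (F : MLS B) : Prop :=
  ∀ n : ℕ, ∃ M : MultilinearMap R (fun _ : Fin n => B) B, ∀ b : Fin n → B, M b = F n b

/-- Componentwise sum of multilinear function series. -/
def add [Ring B] (F G : MLS B) : MLS B := fun n b => F n b + G n b

/-- Dykema's product of multilinear function series:
`(F·G)ₙ(b₁,…,bₙ) = ∑ₖ Fₖ(b₁,…,bₖ)·G_{n-k}(b_{k+1},…,bₙ)`. -/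
def mul [Ring B] (F G : MLS B) : MLS B := fun n b =>
  ∑ k : Fin (n + 1),
    F k.val (fun i : Fin k.val => b (Fin.castLE (Nat.lt_succ_iff.mp k.isLt) i)) *
      G (n - k.val) (fun i : Fin (n - k.val) =>
        b ⟨k.val + i.val, by have h1 := i.isLt; have h2 := k.isLt; omega⟩)

/-- The unit series `1`, with constant term `1` and vanishing higher terms. -/
def one [Ring B] : MLS B := fun n _ => if n = 0 then 1 else 0

/-- The identity series `I`, with `I₁(b) = b` and all other components zero. -/
def idS [Ring B] : MLS B := fun n b => if h : n = 1 then b ⟨0, by omega⟩ else 0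

/-- Composition of multilinear function series (appropriate when `const G = 0`):
`(F∘G)ₙ(b₁,…,bₙ) = ∑_{p₁+⋯+p_k=n, pᵢ ≥ 1} F_k(G_{p₁}(…), …, G_{p_k}(…))`,
with `(F∘G)₀ = F₀`. -/
def comp [Ring B] (F G : MLS B) : MLS B := fun n b =>
  ∑ c : Composition n,
    F c.length (fun i : Fin c.length =>
      G (c.blocksFun i) (fun j : Fin (c.blocksFun i) => b (c.embedding i j)))

end MLS

/-- An operator-valued probability space: a unital algebra `A` with a distinguished
unital subalgebra (given by the embedding `ι : B →ₐ[R] A`) and a conditional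
expectation `E : A → B`. -/
structure OVPS (R A B : Type*) [CommRing R] [Ring A] [Algebra R A] [Ring B] [Algebra R B] where
  ι : B →ₐ[R] A
  E : A →ₗ[R] B
  E_ι : ∀ b : B, E (ι b) = b
  E_bimodule : ∀ (b₁ b₂ : B) (a : A), E (ι b₁ * a * ι b₂) = b₁ * E a * b₂

/-- The operator-valued moment series `Φ_x = ∑ₙ E[x b₁ x ⋯ bₙ x]` of a random variable. -/
def OVPS.momentSeries {R A B : Type*} [CommRing R] [Ring A] [Algebra R A] [Ring B] [Algebra R B]
    (P : OVPS R A B) (x : A) : MLS B :=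
  fun n b => P.E (x * (List.ofFn fun i : Fin n => P.ι (b i) * x).prod)

namespace MLS

variable {B : Type*}

section Aux
variable [Ring B]

/-- Apply a series to the first `n` values of an infinite sequence. -/
def ap (F : MLS B) (n : ℕ) (b : ℕ → B) : B := F n fun i => b i

lemma ext_ap {F G : MLS B} (h : ∀ n (b : ℕ → B), ap F n b = ap G n b) : F = G := by
  funext n b
  have key : (fun i : Fin n => if hi : (i : ℕ) < n then b ⟨i, hi⟩ else 0) = b := by
    funext i; simp [i.isLt]
  have h' := h n (fun i => if hi : i < n then b ⟨i, hi⟩ else 0)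
  rw [ap, ap, key] at h'
  exact h'

lemma ap_mul (F G : MLS B) (n : ℕ) (b : ℕ → B) :
    ap (F.mul G) n b =
      ∑ k ∈ Finset.range (n + 1), ap F k b * ap G (n - k) (fun i => b (k + i)) :=
  Fin.sum_univ_eq_sum_range (fun k => ap F k b * ap G (n - k) (fun i => b (k + i))) (n + 1)

lemma ap_add (F G : MLS B) (n : ℕ) (b : ℕ → B) :
    ap (F.add G) n b = ap F n b + ap G n b := rfl

lemma sum_range_swap {M : Type*} [AddCommMonoid M] (n : ℕ) (f : ℕ → ℕ → M) :
    ∑ k ∈ Finset.range (n + 1), ∑ j ∈ Finset.range (k + 1), f j k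
      = ∑ j ∈ Finset.range (n + 1), ∑ m ∈ Finset.range (n - j + 1), f j (j + m) := by
  simp only [Finset.range_eq_Ico]
  rw [← Finset.sum_Ico_Ico_comm 0 (n + 1) (fun j k => f j k)]
  refine Finset.sum_congr rfl fun j hj => ?_
  rw [Finset.sum_Ico_eq_sum_range]
  have hjn : j ≤ n := by simpa using Nat.lt_succ_iff.mp (Finset.mem_Ico.mp hj).2
  have : n + 1 - j = n - j + 1 := by omega
  rw [this, Finset.range_eq_Ico]

lemma mul_assoc' (F G H : MLS B) : (F.mul G).mul H = F.mul (G.mul H) := by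
  apply ext_ap; intro n b
  rw [ap_mul, ap_mul]
  simp only [ap_mul, Finset.sum_mul, Finset.mul_sum]
  rw [sum_range_swap n (fun j k =>
      F.ap j b * G.ap (k - j) (fun i => b (j + i)) * H.ap (n - k) (fun i => b (k + i)))]
  refine Finset.sum_congr rfl fun j hj => Finset.sum_congr rfl fun m hm => ?_
  have hjn : j ≤ n := Nat.lt_succ_iff.mp (Finset.mem_range.mp hj)
  have hm' : m ≤ n - j := Nat.lt_succ_iff.mp (Finset.mem_range.mp hm)
  have e1 : j + m - j = m := by omega
  have e2 : n - (j + m) = n - j - m := by omega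
  have e3 : (fun i => b (j + m + i)) = (fun i => b (j + (m + i))) := by
    funext i; congr 1; omega
  rw [e1, e2, e3, mul_assoc]

lemma add_mul' (F G H : MLS B) : (F.add G).mul H = (F.mul H).add (G.mul H) := by
  apply ext_ap; intro n b
  simp [ap_mul, ap_add, add_mul, Finset.sum_add_distrib]

lemma mul_add' (F G H : MLS B) : F.mul (G.add H) = (F.mul G).add (F.mul H) := by
  apply ext_ap; intro n b
  simp [ap_mul, ap_add, mul_add, Finset.sum_add_distrib]

lemma ap_one (n : ℕ) (b : ℕ → B) : ap (one : MLS B) n b = if n = 0 then 1 else 0 := rfl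

lemma one_mul' (F : MLS B) : (one : MLS B).mul F = F := by
  apply ext_ap; intro n b
  rw [ap_mul, Finset.sum_eq_single 0]
  · simp [ap, one]
  · intro k hk hk0; simp [ap_one, hk0]
  · simp

lemma mul_one' (F : MLS B) : F.mul (one : MLS B) = F := by
  apply ext_ap; intro n b
  rw [ap_mul, Finset.sum_eq_single n]
  · simp [ap_one]
  · intro k hk hkn
    have : ¬ (n - k = 0) := by
      have := Finset.mem_range.mp hk; omega
    simp [ap_one, this]
  · simp

lemma right_cancel {F G U : MLS B} (hU : ∀ b : Fin 0 → B, U 0 b = 1)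
    (h : F.mul U = G.mul U) : F = G := by
  apply ext_ap
  intro n
  induction n using Nat.strong_induction_on with
  | _ n ih =>
    intro b
    have h' := congrArg (fun X : MLS B => ap X n b) h
    simp only [ap_mul] at h'
    rw [Finset.sum_range_succ, Finset.sum_range_succ] at h'
    rw [Finset.sum_congr rfl (fun k hk => by
      rw [ih k (Finset.mem_range.mp hk)])] at h'
    have h'' := add_left_cancel h'
    have hu : ap U (n - n) (fun i => b (n + i)) = 1 := by
      rw [Nat.sub_self]; exact hU _
    rwa [hu, mul_one, mul_one] at h''

lemma left_cancel {F G V : MLS B} (hV : ∀ b : Fin 0 → B, V 0 b = 1)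
    (h : V.mul F = V.mul G) : F = G := by
  apply ext_ap
  intro n
  induction n using Nat.strong_induction_on with
  | _ n ih =>
    intro b
    have h' := congrArg (fun X : MLS B => ap X n b) h
    simp only [ap_mul] at h'
    rw [Finset.sum_range_succ', Finset.sum_range_succ'] at h'
    rw [Finset.sum_congr rfl (fun k hk => by
      have hk' := Finset.mem_range.mp hk
      rw [ih (n - (k + 1)) (by omega)])] at h'
    have h'' := add_left_cancel h'
    have hv : ap V 0 b = 1 := hV _
    rw [hv, one_mul, one_mul] at h''
    simpa using h''

end Aux

end MLS

/-- for the moment series `Φ` of a random variable `x`, the two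
moment-cumulant relations `Φ = C∘(I + I·Φ·I)·(1 + I·Φ)` and
`Φ = (1 + Φ·I)·C∘(I + I·Φ·I)` are equivalent (they determine the same cumulant
series `C`). -/
theorem ovps_moment_cumulant_relations_equiv {R A B : Type*} [CommRing R] [Ring A]
    [Algebra R A] [Ring B] [Algebra R B] (P : OVPS R A B) (x : A) (C : MLS B)
    (hC : MLS.IsMultilinear R C) :
    (P.momentSeries x =
        (C.comp (MLS.idS.add ((MLS.idS.mul (P.momentSeries x)).mul MLS.idS))).mul
          (MLS.one.add (MLS.idS.mul (P.momentSeries x)))) ↔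
      (P.momentSeries x =
        (MLS.one.add ((P.momentSeries x).mul MLS.idS)).mul
          (C.comp (MLS.idS.add ((MLS.idS.mul (P.momentSeries x)).mul MLS.idS)))) := by
  set Φ : MLS B := P.momentSeries x with hPhi
  set D : MLS B := C.comp (MLS.idS.add ((MLS.idS.mul Φ).mul MLS.idS)) with hD
  set U : MLS B := MLS.one.add (MLS.idS.mul Φ) with hU
  set V : MLS B := MLS.one.add (Φ.mul MLS.idS) with hV
  have hU0 : ∀ b : Fin 0 → B, U 0 b = 1 := by
    intro b
    simp [hU, MLS.add, MLS.one, MLS.mul, MLS.idS, Fin.sum_univ_succ]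
  have hV0 : ∀ b : Fin 0 → B, V 0 b = 1 := by
    intro b
    simp [hV, MLS.add, MLS.one, MLS.mul, MLS.idS, Fin.sum_univ_succ]
  have key : V.mul Φ = Φ.mul U := by
    rw [hU, hV, MLS.add_mul', MLS.mul_add', MLS.one_mul', MLS.mul_one', MLS.mul_assoc']
  constructor
  · intro h
    have h2 : (V.mul D).mul U = Φ.mul U := by
      rw [MLS.mul_assoc', ← h, key]
    exact MLS.right_cancel hU0 h2.symm
  · intro h
    have h2 : V.mul Φ = V.mul (D.mul U) := by
      rw [key, ← MLS.mul_assoc', ← h]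
    exact MLS.left_cancel hV0 h2
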